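/- arXiv:1504.06157 — 3 statements merged into one kernel-verified Lean document; each statement's English description precedes it below -/
import Mathlib

section
/- For every prime p and every integer n ≥ 1, there exists a nonzero locally constant compactly supported function φ : M_n(ℚ_p) → ℂ which is a Lie algebra cusp form, i.e. such that for every proper flag in ℚ_p^n with nilpotent radical 𝔫 (equipped with a Haar measure) and every X ∈ M_n(ℚ_p), the integral ∫_𝔫 φ(X + U) dU equals 0. -/
open Matrix

noncomputable section

/-- A proper flag in `ℚ_p^n`: a strictly increasing chain of `ℚ_p`-subspaces
`0 = V 0 ⊊ V 1 ⊊ ⋯ ⊊ V r = ℚ_p^n` with `r ≥ 2`. -/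
structure ProperFlag (p n : ℕ) [Fact p.Prime] where
  r : ℕ
  two_le_r : 2 ≤ r
  V : Fin (r + 1) → Submodule ℚ_[p] (Fin n → ℚ_[p])
  strictMono : StrictMono V
  zero_eq_bot : V 0 = ⊥
  last_eq_top : V (Fin.last r) = ⊤

variable {p n : ℕ} [Fact p.Prime]

namespace ProperFlag

lemma mapsTo_of_mem {F : ProperFlag p n} {g : GL (Fin n) ℚ_[p]}
    (hg : ∀ i : Fin F.r, ∀ v ∈ F.V i.succ, g.val.mulVec v - v ∈ F.V i.castSucc)
    (i : Fin F.r) : ∀ v ∈ F.V i.succ, g.val.mulVec v ∈ F.V i.succ := by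
  intro v hv
  have h1 : g.val.mulVec v - v ∈ F.V i.castSucc := hg i v hv
  have h2 : F.V i.castSucc ≤ F.V i.succ := le_of_lt (F.strictMono (show i.castSucc < i.succ from Fin.castSucc_lt_succ))
  have := (F.V i.succ).add_mem (h2 h1) hv
  simpa using this

/-- The unipotent radical of a proper flag:
`N = {g ∈ GL_n(ℚ_p) : (g - 1) V_i ⊆ V_{i-1} for all 1 ≤ i ≤ r}`. -/
def N (F : ProperFlag p n) : Subgroup (GL (Fin n) ℚ_[p]) where
  carrier := {g | ∀ i : Fin F.r, ∀ v ∈ F.V i.succ, g.val.mulVec v - v ∈ F.V i.castSucc}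
  one_mem' := by
    intro i v hv
    simp only [Units.val_one, Matrix.one_mulVec, sub_self]
    exact (F.V i.castSucc).zero_mem
  mul_mem' := by
    intro g h hg hh i v hv
    have hw : h.val.mulVec v ∈ F.V i.succ := mapsTo_of_mem hh i v hv
    have h1 : g.val.mulVec (h.val.mulVec v) - h.val.mulVec v ∈ F.V i.castSucc := hg i _ hw
    have h2 : h.val.mulVec v - v ∈ F.V i.castSucc := hh i v hv
    have := (F.V i.castSucc).add_mem h1 h2
    simpa [Matrix.mulVec_mulVec, Units.val_mul, sub_add_sub_cancel] using this
  inv_mem' := by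
    intro g hg i v hv
    -- the restriction of `g` to `F.V i.succ` is a bijection since it is injective
    set W := F.V i.succ with hW
    have hmap : ∀ w ∈ W, g.val.mulVec w ∈ W := mapsTo_of_mem hg i
    let φ : W →ₗ[ℚ_[p]] W := (g.val.mulVecLin).restrict (by
      intro w hw; simpa using hmap w hw)
    have hinj : Function.Injective φ := by
      intro a b hab
      have : g.val.mulVec a.1 = g.val.mulVec b.1 := congrArg Subtype.val hab
      have h2 : (g⁻¹).val.mulVec (g.val.mulVec a.1) = (g⁻¹).val.mulVec (g.val.mulVec b.1) := by
        rw [this]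
      rw [Matrix.mulVec_mulVec, Matrix.mulVec_mulVec, ← Units.val_mul, inv_mul_cancel g,
        Units.val_one, Matrix.one_mulVec, Matrix.one_mulVec] at h2
      exact Subtype.ext h2
    have hsurj : Function.Surjective φ := (LinearMap.injective_iff_surjective).1 hinj
    obtain ⟨⟨w, hw⟩, hweq⟩ := hsurj ⟨v, hv⟩
    have heq : g.val.mulVec w = v := congrArg Subtype.val hweq
    have hginv : (g⁻¹).val.mulVec v = w := by
      rw [← heq, Matrix.mulVec_mulVec, ← Units.val_mul, inv_mul_cancel g, Units.val_one,
        Matrix.one_mulVec]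
    rw [hginv]
    have := (F.V i.castSucc).neg_mem (hg i w hw)
    simp only [neg_sub] at this
    simpa [heq] using this

/-- The nilpotent radical of a proper flag:
`𝔫 = {X ∈ M_n(ℚ_p) : X V_i ⊆ V_{i-1} for all 1 ≤ i ≤ r}`. -/
def nil (F : ProperFlag p n) : Submodule ℚ_[p] (Matrix (Fin n) (Fin n) ℚ_[p]) where
  carrier := {X | ∀ i : Fin F.r, ∀ v ∈ F.V i.succ, X.mulVec v ∈ F.V i.castSucc}
  zero_mem' := by
    intro i v hv
    simp only [Matrix.zero_mulVec]
    exact (F.V i.castSucc).zero_mem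
  add_mem' := by
    intro X Y hX hY i v hv
    have := (F.V i.castSucc).add_mem (hX i v hv) (hY i v hv)
    simpa [Matrix.add_mulVec] using this
  smul_mem' := by
    intro c X hX i v hv
    have := (F.V i.castSucc).smul_mem c (hX i v hv)
    simpa [Matrix.smul_mulVec] using this

noncomputable instance (F : ProperFlag p n) : MeasurableSpace F.N := borel _
instance (F : ProperFlag p n) : BorelSpace F.N := ⟨rfl⟩
noncomputable instance (F : ProperFlag p n) : MeasurableSpace F.nil := borel _
instance (F : ProperFlag p n) : BorelSpace F.nil := ⟨rfl⟩

end ProperFlag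

namespace LieCuspAux

open Matrix

variable {p : ℕ} [Fact p.Prime] {n : ℕ}

def mkZ {p : ℕ} [Fact p.Prime] (x : ℚ_[p]) (h : ‖x‖ ≤ 1) : ℤ_[p] := ⟨x, h⟩

@[simp] lemma mkZ_coe {x : ℚ_[p]} (h : ‖x‖ ≤ 1) : ((mkZ x h : ℤ_[p]) : ℚ_[p]) = x := rfl

noncomputable def qred (p : ℕ) [Fact p.Prime] (x : ℚ_[p]) : ZMod p :=
  if h : ‖x‖ ≤ 1 then PadicInt.toZMod (mkZ x h) else 0

lemma qred_coe (z : ℤ_[p]) : qred p (z : ℚ_[p]) = PadicInt.toZMod z := by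
  rw [qred, dif_pos z.2]
  congr 1

lemma qred_zero : qred p (0 : ℚ_[p]) = 0 := by
  have h : ((0 : ℤ_[p]) : ℚ_[p]) = (0 : ℚ_[p]) := by simp
  rw [← h, qred_coe, map_zero]

lemma qred_add {x y : ℚ_[p]} (hx : ‖x‖ ≤ 1) (hy : ‖y‖ ≤ 1) :
    qred p (x + y) = qred p x + qred p y := by
  have hxy : ‖x + y‖ ≤ 1 := le_trans (Padic.nonarchimedean x y) (max_le hx hy)
  have hadd : mkZ (x + y) hxy = mkZ x hx + mkZ y hy := rfl
  rw [qred, qred, qred, dif_pos hxy, dif_pos hx, dif_pos hy, hadd, map_add]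

lemma qred_eq_of_close {x y : ℚ_[p]} (hx : ‖x‖ ≤ 1) (hy : ‖y‖ ≤ 1) (h : ‖x - y‖ < 1) :
    qred p x = qred p y := by
  rw [qred, qred, dif_pos hx, dif_pos hy]
  rw [← sub_eq_zero, ← map_sub]
  have heq : mkZ x hx - mkZ y hy = mkZ (x - y) h.le := rfl
  rw [heq, ← RingHom.mem_ker, PadicInt.ker_toZMod, PadicInt.maximalIdeal_eq_span_p,
    Ideal.mem_span_singleton, ← PadicInt.norm_lt_one_iff_dvd, PadicInt.norm_def]
  exact h

lemma exists_good_matrix (p : ℕ) [Fact p.Prime] (n : ℕ) (hn : 1 ≤ n) :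
    ∃ Bb : Matrix (Fin n) (Fin n) (ZMod p),
      ∀ W : Submodule (ZMod p) (Fin n → ZMod p),
        (∀ x ∈ W, Bb *ᵥ x ∈ W) → W = ⊥ ∨ W = ⊤ := by
  classical
  have hn0 : n ≠ 0 := by omega
  set K := GaloisField p n with hK
  have hfr : Module.finrank (ZMod p) K = n := GaloisField.finrank p hn0
  let b : Module.Basis (Fin n) (ZMod p) K := Module.finBasisOfFinrankEq (ZMod p) K hfr
  obtain ⟨γ, hγ⟩ := IsCyclic.exists_generator (α := Kˣ)
  refine ⟨Algebra.leftMulMatrix b (γ : K), ?_⟩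
  intro W hW
  by_cases hbot : W = ⊥
  · exact Or.inl hbot
  right
  let e := b.equivFun
  let W' : Submodule (ZMod p) K := W.comap e.toLinearMap
  have hstab : ∀ x ∈ W', (γ : K) * x ∈ W' := by
    intro x hx
    have hrepr : e ((γ : K) * x) = Algebra.leftMulMatrix b (γ : K) *ᵥ (e x) := by
      ext i
      rw [Module.Basis.equivFun_apply, Module.Basis.equivFun_apply,
        Algebra.leftMulMatrix_mulVec_repr]
    simpa [W', Submodule.mem_comap, hrepr] using hW _ hx
  have hpow : ∀ (k : ℕ), ∀ x ∈ W', (γ : K) ^ k * x ∈ W' := by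
    intro k
    induction k with
    | zero => intro x hx; simpa using hx
    | succ k ih =>
        intro x hx
        have := hstab _ (ih x hx)
        rw [← mul_assoc, mul_comm ((γ : K)) ((γ : K) ^ k)] at this
        rw [pow_succ]
        exact this
  obtain ⟨y, hyW, hy0⟩ := Submodule.exists_mem_ne_zero_of_ne_bot hbot
  have hwmem : e.symm y ∈ W' := by
    simp [W', Submodule.mem_comap, LinearEquiv.apply_symm_apply, hyW]
  have hw0 : e.symm y ≠ 0 := by
    intro h
    exact hy0 (by simpa [h] using (e.apply_symm_apply y).symm)
  have hW'top : W' = ⊤ := by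
    rw [eq_top_iff]
    intro z _
    by_cases hz : z = 0
    · simp [hz]
    · have hu : ∃ k : ℕ, (γ : K) ^ k = z * (e.symm y)⁻¹ := by
        have hne : z * (e.symm y)⁻¹ ≠ 0 := mul_ne_zero hz (inv_ne_zero hw0)
        have hmem : Units.mk0 _ hne ∈ Submonoid.powers γ := by
          rw [mem_powers_iff_mem_zpowers]
          exact hγ _
        obtain ⟨k, hk⟩ := hmem
        refine ⟨k, ?_⟩
        have := congrArg (Units.val) hk
        simpa using this
      obtain ⟨k, hk⟩ := hu
      have := hpow k _ hwmem
      rwa [hk, mul_assoc, inv_mul_cancel₀ hw0, mul_one] at this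
  rw [eq_top_iff]
  intro v _
  have : e.symm v ∈ W' := hW'top ▸ Submodule.mem_top
  simpa [W', Submodule.mem_comap] using this

lemma exists_scale (v : Fin n → ℚ_[p]) :
    ∃ c : ℚ_[p], c ≠ 0 ∧ ∀ i, ‖c * v i‖ ≤ 1 := by
  have hp1 : (1 : ℝ) < p := by exact_mod_cast (Fact.out : p.Prime).one_lt
  have hp0 : (p : ℚ_[p]) ≠ 0 := by
    exact_mod_cast (Fact.out : p.Prime).ne_zero
  have h1 : ∀ x : ℚ_[p], ∃ k : ℕ, ‖(p : ℚ_[p]) ^ k * x‖ ≤ 1 := by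
    intro x
    obtain ⟨k, hk⟩ := pow_unbounded_of_one_lt ‖x‖ hp1
    refine ⟨k, ?_⟩
    rw [norm_mul, norm_pow, Padic.norm_p, inv_pow]
    rw [inv_mul_le_iff₀ (by positivity)]
    simpa using hk.le
  choose f hf using fun i => h1 (v i)
  refine ⟨(p : ℚ_[p]) ^ (Finset.univ.sup f), pow_ne_zero _ hp0, fun i => ?_⟩
  obtain ⟨m, hm⟩ := Nat.exists_eq_add_of_le (Finset.le_sup (f := f) (Finset.mem_univ i))
  rw [hm, pow_add, mul_comm ((p : ℚ_[p]) ^ (f i)), mul_assoc, norm_mul, norm_pow,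
    Padic.norm_p]
  calc ((p : ℝ)⁻¹) ^ m * ‖(p : ℚ_[p]) ^ (f i) * v i‖ ≤ 1 * 1 := by
        apply mul_le_mul _ (hf i) (norm_nonneg _) zero_le_one
        apply pow_le_one₀ (by positivity)
        rw [inv_le_one_iff₀]
        right; linarith
    _ = 1 := by ring

/-- the lattice of integral points of a subspace -/
noncomputable def intLattice (V : Submodule ℚ_[p] (Fin n → ℚ_[p])) : Submodule ℤ_[p] (Fin n → ℤ_[p]) where
  carrier := {x | (fun i => (x i : ℚ_[p])) ∈ V}
  zero_mem' := by
    have h : (fun i => (((0 : Fin n → ℤ_[p]) i : ℤ_[p]) : ℚ_[p])) = (0 : Fin n → ℚ_[p]) := by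
      funext i; simp
    simp only [Set.mem_setOf_eq, h]
    exact V.zero_mem
  add_mem' := by
    intro a b ha hb
    have h : (fun i => (((a + b) i : ℤ_[p]) : ℚ_[p]))
        = (fun i => ((a i : ℤ_[p]) : ℚ_[p])) + fun i => ((b i : ℤ_[p]) : ℚ_[p]) := by
      funext i; push_cast; simp
    show (fun i => (((a + b) i : ℤ_[p]) : ℚ_[p])) ∈ V
    rw [h]
    exact V.add_mem ha hb
  smul_mem' := by
    intro c x hx
    have h : (fun i => (((c • x) i : ℤ_[p]) : ℚ_[p]))
        = ((c : ℚ_[p])) • fun i => ((x i : ℤ_[p]) : ℚ_[p]) := by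
      funext i
      simp [Pi.smul_apply, smul_eq_mul]
    show (fun i => (((c • x) i : ℤ_[p]) : ℚ_[p])) ∈ V
    rw [h]
    exact V.smul_mem ((c : ℚ_[p])) hx

lemma mem_intLattice {V : Submodule ℚ_[p] (Fin n → ℚ_[p])} {x : Fin n → ℤ_[p]} :
    x ∈ intLattice V ↔ (fun i => (x i : ℚ_[p])) ∈ V := Iff.rfl

/-- coordinate subspace mod p supported on a set of indices -/
def coordSub (p : ℕ) [Fact p.Prime] {n : ℕ} (T : Set (Fin n)) [DecidablePred (· ∈ T)] :
    Submodule (ZMod p) (Fin n → ZMod p) where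
  carrier := {x | ∀ j ∉ T, x j = 0}
  zero_mem' := by intro j _; rfl
  add_mem' := by intro a b ha hb j hj; simp [ha j hj, hb j hj]
  smul_mem' := by intro c x hx j hj; simp [hx j hj]

end LieCuspAux

namespace LieCuspAux

open Matrix

variable {p : ℕ} [Fact p.Prime] {n : ℕ}

lemma key (Bb : Matrix (Fin n) (Fin n) (ZMod p))
    (hB : ∀ W : Submodule (ZMod p) (Fin n → ZMod p),
      (∀ x ∈ W, Bb *ᵥ x ∈ W) → W = ⊥ ∨ W = ⊤)
    (F : ProperFlag p n) :
    ∃ U₀ : Matrix (Fin n) (Fin n) ℚ_[p], U₀ ∈ F.nil ∧ (∀ i j, ‖U₀ i j‖ ≤ 1) ∧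
      Matrix.trace (Bb * U₀.map (qred p)) ≠ 0 := by
  classical
  have hr := F.two_le_r
  have h1r : (1 : ℕ) < F.r + 1 := by omega
  have h2r : (2 : ℕ) < F.r + 1 := by omega
  set i1 : Fin (F.r + 1) := ⟨1, h1r⟩ with hi1
  set i2 : Fin (F.r + 1) := ⟨2, h2r⟩ with hi2
  set V₁ : Submodule ℚ_[p] (Fin n → ℚ_[p]) := F.V i1 with hV₁
  have hV1bot : V₁ ≠ ⊥ := by
    have h0 : (0 : Fin (F.r + 1)) < i1 := by
      rw [Fin.lt_def]; simp [hi1]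
    have := F.strictMono h0
    rw [F.zero_eq_bot] at this
    exact this.ne'
  have hV1top : V₁ ≠ ⊤ := by
    have h12 : i1 < i2 := by rw [Fin.lt_def]; simp [hi1, hi2]
    have hlt : V₁ < F.V i2 := F.strictMono h12
    intro h
    rw [h] at hlt
    exact absurd hlt not_top_lt
  set N : Submodule ℤ_[p] (Fin n → ℤ_[p]) := intLattice V₁ with hN
  obtain ⟨m, snf⟩ := N.smithNormalForm (Pi.basisFun ℤ_[p] (Fin n))
  set G : Matrix (Fin n) (Fin n) ℤ_[p] := (Pi.basisFun ℤ_[p] (Fin n)).toMatrix snf.bM with hG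
  haveI : Invertible G := (Pi.basisFun ℤ_[p] (Fin n)).invertibleToMatrix snf.bM
  set H : Matrix (Fin n) (Fin n) ℤ_[p] := ⅟G with hH
  have hGH : G * H = 1 := mul_invOf_self G
  have hHG : H * G = 1 := invOf_mul_self G
  have hGdef : ∀ i j, G i j = snf.bM j i := by
    intro i j
    rw [hG, Module.Basis.toMatrix_apply, Pi.basisFun_repr]
  have hGmulVec : ∀ x : Fin n → ℤ_[p], G *ᵥ ⇑(snf.bM.repr x) = x := by
    intro x
    funext i
    have hx := snf.bM.sum_repr x
    calc (G *ᵥ ⇑(snf.bM.repr x)) i = ∑ j, G i j * snf.bM.repr x j := by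
          simp [Matrix.mulVec, dotProduct]
      _ = ∑ j, snf.bM.repr x j • (snf.bM j) i := by
          refine Finset.sum_congr rfl fun j _ => ?_
          rw [hGdef, smul_eq_mul, mul_comm]
      _ = (∑ j, snf.bM.repr x j • snf.bM j) i := by
          rw [Finset.sum_apply]
          simp
      _ = x i := by rw [hx]
  have hHrepr : ∀ x : Fin n → ℤ_[p], H *ᵥ x = ⇑(snf.bM.repr x) := by
    intro x
    conv_lhs => rw [← hGmulVec x]
    rw [Matrix.mulVec_mulVec, hHG, Matrix.one_mulVec]
  set ρ : ℤ_[p] →+* ℚ_[p] := PadicInt.Coe.ringHom with hρ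
  set Gq : Matrix (Fin n) (Fin n) ℚ_[p] := ρ.mapMatrix G with hGq
  set Hq : Matrix (Fin n) (Fin n) ℚ_[p] := ρ.mapMatrix H with hHq
  have hGq_apply : ∀ k l, Gq k l = ρ (G k l) := by
    intro k l; rw [hGq, RingHom.mapMatrix_apply, Matrix.map_apply]
  have hHq_apply : ∀ k l, Hq k l = ρ (H k l) := by
    intro k l; rw [hHq, RingHom.mapMatrix_apply, Matrix.map_apply]
  set τ : ℤ_[p] →+* ZMod p := PadicInt.toZMod with hτ
  set gbar : Matrix (Fin n) (Fin n) (ZMod p) := τ.mapMatrix G with hgbar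
  set hbar : Matrix (Fin n) (Fin n) (ZMod p) := τ.mapMatrix H with hhbar
  have hgbar_apply : ∀ k l, gbar k l = τ (G k l) := by
    intro k l; rw [hgbar, RingHom.mapMatrix_apply, Matrix.map_apply]
  have hhbar_apply : ∀ k l, hbar k l = τ (H k l) := by
    intro k l; rw [hhbar, RingHom.mapMatrix_apply, Matrix.map_apply]
  have hghb : gbar * hbar = 1 := by rw [hgbar, hhbar, ← _root_.map_mul, hGH, _root_.map_one]
  have hhgb : hbar * gbar = 1 := by rw [hgbar, hhbar, ← _root_.map_mul, hHG, _root_.map_one]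
  have hqred : ∀ z : ℤ_[p], qred p (ρ z) = τ z := fun z => qred_coe z
  have hnorm1 : ∀ z : ℤ_[p], ‖ρ z‖ ≤ 1 := fun z => z.2
  -- the columns of Gq indexed by the range of snf.f lie in V₁
  have hcolq : ∀ i : Fin m, (fun k => Gq k (snf.f i)) ∈ V₁ := by
    intro i
    have hmem : (fun k => ρ ((snf.bN i : Fin n → ℤ_[p]) k)) ∈ V₁ :=
      (mem_intLattice).1 (snf.bN i).2
    have ha0 : snf.a i ≠ 0 := by
      intro h
      have hs := snf.snf i
      rw [h, zero_smul] at hs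
      exact snf.bN.ne_zero i (Subtype.ext hs)
    have hane : ρ (snf.a i) ≠ 0 := by
      intro h
      apply ha0
      have h2 : ((snf.a i : ℤ_[p]) : ℚ_[p]) = 0 := h
      exact Subtype.ext h2
    have hceq : (fun k => ρ ((snf.bN i : Fin n → ℤ_[p]) k))
        = ρ (snf.a i) • (fun k => Gq k (snf.f i)) := by
      funext k
      rw [snf.snf i]
      simp only [Pi.smul_apply, smul_eq_mul, _root_.map_mul]
      rw [hGq_apply, hGdef]
    rw [hceq] at hmem
    have := V₁.smul_mem (ρ (snf.a i))⁻¹ hmem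
    rwa [smul_smul, inv_mul_cancel₀ hane, one_smul] at this
  -- rows of Hq outside the range of snf.f annihilate V₁
  have hrow : ∀ j, j ∉ Set.range snf.f → ∀ v ∈ V₁, (Hq *ᵥ v) j = 0 := by
    intro j hj v hv
    obtain ⟨c, hc0, hcle⟩ := exists_scale v
    set w : Fin n → ℤ_[p] := fun i => mkZ (c * v i) (hcle i) with hw
    have hwcoe : ∀ i, ρ (w i) = c * v i := fun i => rfl
    have hwN : w ∈ N := by
      rw [hN, mem_intLattice]
      have h : (fun i => ((w i : ℤ_[p]) : ℚ_[p])) = c • v := by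
        funext i
        exact hwcoe i
      rw [h]
      exact V₁.smul_mem c hv
    have hHw : (H *ᵥ w) j = 0 := by
      rw [hHrepr]
      exact snf.repr_eq_zero_of_notMem_range (m := ⟨w, hwN⟩) hj
    have hcoe : ρ ((H *ᵥ w) j) = c * (Hq *ᵥ v) j := by
      have h1 : (H *ᵥ w) j = ∑ k, H j k * w k := by
        simp [Matrix.mulVec, dotProduct]
      have h2 : (Hq *ᵥ v) j = ∑ k, Hq j k * v k := by
        simp [Matrix.mulVec, dotProduct]
      rw [h1, h2, _root_.map_sum, Finset.mul_sum]
      refine Finset.sum_congr rfl fun k _ => ?_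
      rw [_root_.map_mul, hwcoe, hHq_apply]
      ring
    rw [hHw, _root_.map_zero] at hcoe
    rcases mul_eq_zero.1 hcoe.symm with h | h
    · exact absurd h hc0
    · exact h
  -- m ≥ 1
  have hmpos : 0 < m := by
    rcases Nat.eq_zero_or_pos m with hm0 | h
    · exfalso
      obtain ⟨v, hvV, hv0⟩ := Submodule.exists_mem_ne_zero_of_ne_bot hV1bot
      obtain ⟨c, hc0, hcle⟩ := exists_scale v
      set w : Fin n → ℤ_[p] := fun i => mkZ (c * v i) (hcle i) with hw
      have hwN : w ∈ N := by
        rw [hN, mem_intLattice]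
        have h : (fun i => ((w i : ℤ_[p]) : ℚ_[p])) = c • v := by
          funext i; rfl
        rw [h]
        exact V₁.smul_mem c hvV
      have hw0 : w ≠ 0 := by
        intro h
        apply hv0
        funext i
        have h1 : ((w i : ℤ_[p]) : ℚ_[p]) = 0 := by rw [h]; simp
        have h2 : c * v i = 0 := h1
        rcases mul_eq_zero.1 h2 with h' | h'
        · exact absurd h' hc0
        · exact h'
      subst hm0
      have hz := snf.bN.sum_repr ⟨w, hwN⟩
      rw [Finset.univ_eq_empty, Finset.sum_empty] at hz
      exact hw0 (by simpa using congrArg Subtype.val hz.symm)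
    · exact h
  -- there is an index outside the range of snf.f
  have hjex : ∃ j, j ∉ Set.range snf.f := by
    by_contra hall
    push_neg at hall
    apply hV1top
    rw [eq_top_iff]
    rintro v -
    obtain ⟨c, hc0, hcle⟩ := exists_scale v
    set w : Fin n → ℤ_[p] := fun i => mkZ (c * v i) (hcle i) with hw
    have hcw : (fun i => ρ (w i)) = c • v := by
      funext i; rfl
    have hcv : c • v ∈ V₁ := by
      rw [← hcw]
      have hGw : G *ᵥ ⇑(snf.bM.repr w) = w := hGmulVec w
      have hexp : (fun i => ρ (w i))
          = ∑ l, ρ (snf.bM.repr w l) • (fun k => Gq k l) := by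
        funext k
        rw [Finset.sum_apply]
        have h1 : w k = ∑ l, G k l * snf.bM.repr w l := by
          conv_lhs => rw [← hGw]
          simp [Matrix.mulVec, dotProduct]
        rw [h1, _root_.map_sum]
        refine Finset.sum_congr rfl fun l _ => ?_
        rw [_root_.map_mul]
        simp only [Pi.smul_apply, smul_eq_mul]
        rw [hGq_apply]
        ring
      rw [hexp]
      refine Submodule.sum_mem _ fun l _ => Submodule.smul_mem _ _ ?_
      obtain ⟨i, hi⟩ := hall l
      rw [← hi]
      exact hcolq i
    have := V₁.smul_mem c⁻¹ hcv
    rwa [smul_smul, inv_mul_cancel₀ hc0, one_smul] at this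
  obtain ⟨j₀, hj₀⟩ := hjex
  -- main contradiction argument
  by_contra hfail
  push_neg at hfail
  have hC0 : ∀ j, j ∉ Set.range snf.f → ∀ i : Fin m, (hbar * Bb * gbar) j (snf.f i) = 0 := by
    intro j hj i
    set U₀ : Matrix (Fin n) (Fin n) ℚ_[p] :=
      fun k l => Gq k (snf.f i) * Hq j l with hU₀
    have hUint : ∀ k l, ‖U₀ k l‖ ≤ 1 := by
      intro k l
      rw [hU₀]
      simp only
      rw [norm_mul, hGq_apply, hHq_apply]
      calc ‖ρ (G k (snf.f i))‖ * ‖ρ (H j l)‖ ≤ 1 * 1 :=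
            mul_le_mul (hnorm1 _) (hnorm1 _) (norm_nonneg _) zero_le_one
        _ = 1 := by ring
    have hUx : ∀ x, U₀ *ᵥ x = ((Hq *ᵥ x) j) • (fun k => Gq k (snf.f i)) := by
      intro x
      funext k
      simp only [Matrix.mulVec, dotProduct, Pi.smul_apply, smul_eq_mul, hU₀]
      rw [Finset.sum_mul]
      refine Finset.sum_congr rfl fun l _ => ?_
      ring
    have hUnil : U₀ ∈ F.nil := by
      show ∀ i' : Fin F.r, ∀ x ∈ F.V i'.succ, U₀.mulVec x ∈ F.V i'.castSucc
      intro i' x hx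
      by_cases hz : (i' : ℕ) = 0
      · have hsucc : i'.succ = i1 := by
          apply Fin.ext
          simp [Fin.val_succ, hz, hi1]
        rw [hsucc] at hx
        rw [show U₀.mulVec x = U₀ *ᵥ x from rfl, hUx, hrow j hj x hx, zero_smul]
        exact Submodule.zero_mem _
      · have hle : i1 ≤ i'.castSucc := by
          rw [Fin.le_def]
          simp only [Fin.coe_castSucc, hi1]
          omega
        rw [show U₀.mulVec x = U₀ *ᵥ x from rfl, hUx]
        exact Submodule.smul_mem _ _ ((F.strictMono.monotone hle) (hcolq i))
    have htr : Matrix.trace (Bb * U₀.map (qred p)) = (hbar * Bb * gbar) j (snf.f i) := by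
      have hmap : U₀.map (qred p) = Matrix.of fun k l => gbar k (snf.f i) * hbar j l := by
        funext k l
        rw [Matrix.map_apply, hU₀]
        simp only [Matrix.of_apply]
        rw [hGq_apply, hHq_apply, ← _root_.map_mul, hqred, _root_.map_mul,
          ← hgbar_apply, ← hhbar_apply]
      rw [hmap]
      have h5 : Matrix.trace (Bb * Matrix.of fun k l => gbar k (snf.f i) * hbar j l)
          = ∑ k, ∑ l, Bb k l * (gbar l (snf.f i) * hbar j k) := by
        simp [Matrix.trace, Matrix.mul_apply, Matrix.diag]
      have h6 : (hbar * Bb * gbar) j (snf.f i)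
          = ∑ l, (∑ k, hbar j k * Bb k l) * gbar l (snf.f i) := by
        simp [Matrix.mul_apply]
      rw [h5, h6, Finset.sum_comm]
      refine Finset.sum_congr rfl fun l _ => ?_
      rw [Finset.sum_mul]
      refine Finset.sum_congr rfl fun k _ => ?_
      ring
    rw [← htr]
    exact hfail U₀ hUnil hUint
  -- build the stable subspace
  letI : DecidablePred (· ∈ Set.range snf.f) := fun _ => Classical.propDecidable _
  set S : Submodule (ZMod p) (Fin n → ZMod p) := coordSub p (Set.range snf.f) with hS
  have hmemS : ∀ x : Fin n → ZMod p, x ∈ S ↔ ∀ j ∉ Set.range snf.f, x j = 0 := fun x => Iff.rfl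
  set W : Submodule (ZMod p) (Fin n → ZMod p) := S.map (Matrix.mulVecLin gbar) with hW
  have hmulinj : ∀ u : Fin n → ZMod p, gbar *ᵥ u = 0 → u = 0 := by
    intro u hu
    have h : hbar *ᵥ (gbar *ᵥ u) = u := by
      rw [Matrix.mulVec_mulVec, hhgb, Matrix.one_mulVec]
    rw [hu, Matrix.mulVec_zero] at h
    exact h.symm
  have hWstab : ∀ y ∈ W, Bb *ᵥ y ∈ W := by
    rintro y ⟨x, hxS, rfl⟩
    have hxS' : ∀ j ∉ Set.range snf.f, x j = 0 := hxS
    refine ⟨(hbar * Bb * gbar) *ᵥ x, ?_, ?_⟩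
    · show ∀ j ∉ Set.range snf.f, ((hbar * Bb * gbar) *ᵥ x) j = 0
      intro j hj
      rw [show ((hbar * Bb * gbar) *ᵥ x) j = ∑ k, (hbar * Bb * gbar) j k * x k by
        simp [Matrix.mulVec, dotProduct]]
      apply Finset.sum_eq_zero
      intro k _
      by_cases hk : k ∈ Set.range snf.f
      · obtain ⟨i, rfl⟩ := hk
        rw [hC0 j hj i, zero_mul]
      · rw [hxS' k hk, mul_zero]
    · simp only [Matrix.mulVecLin_apply]
      rw [Matrix.mulVec_mulVec, Matrix.mulVec_mulVec, ← Matrix.mul_assoc, ← Matrix.mul_assoc,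
        hghb, Matrix.one_mul]
  have hsingle : ∀ (k : Fin n), (Pi.single k 1 : Fin n → ZMod p) k = 1 := by
    intro k; simp
  have hWbot : W ≠ ⊥ := by
    intro hW0
    have hmemW : gbar *ᵥ (Pi.single (snf.f ⟨0, hmpos⟩) 1 : Fin n → ZMod p) ∈ W := by
      refine ⟨(Pi.single (snf.f ⟨0, hmpos⟩) 1 : Fin n → ZMod p), ?_, rfl⟩
      show ∀ j ∉ Set.range snf.f, (Pi.single (snf.f ⟨0, hmpos⟩) 1 : Fin n → ZMod p) j = 0
      intro j hj
      apply Pi.single_eq_of_ne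
      intro h
      exact hj ⟨⟨0, hmpos⟩, h.symm⟩
    rw [hW0, Submodule.mem_bot] at hmemW
    have h1 := hmulinj _ hmemW
    have h2 := congrFun h1 (snf.f ⟨0, hmpos⟩)
    rw [hsingle] at h2
    exact one_ne_zero h2
  have hWtop : W ≠ ⊤ := by
    intro hWt
    have hmemW : gbar *ᵥ (Pi.single j₀ 1 : Fin n → ZMod p) ∈ W := by rw [hWt]; trivial
    obtain ⟨x, hxS, hxe⟩ := hmemW
    simp only [Matrix.mulVecLin_apply] at hxe
    have hxeq : x = (Pi.single j₀ 1 : Fin n → ZMod p) := by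
      have h1 : hbar *ᵥ (gbar *ᵥ x) = hbar *ᵥ (gbar *ᵥ (Pi.single j₀ 1 : Fin n → ZMod p)) := by
        rw [hxe]
      rw [Matrix.mulVec_mulVec, Matrix.mulVec_mulVec, hhgb, Matrix.one_mulVec,
        Matrix.one_mulVec] at h1
      exact h1
    have h2 : x j₀ = 0 := (hmemS x).1 hxS j₀ hj₀
    rw [hxeq, hsingle] at h2
    exact one_ne_zero h2
  rcases hB W hWstab with h | h
  · exact hWbot h
  · exact hWtop h

end LieCuspAux


open MeasureTheory

/-- A cusp form on the Lie algebra `M_n(ℚ_p)`: a locally constant compactly supported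
function whose integrals over the nilpotent radical of every proper flag vanish. -/
def IsLieCuspForm (φ : Matrix (Fin n) (Fin n) ℚ_[p] → ℂ) : Prop :=
  IsLocallyConstant φ ∧ HasCompactSupport φ ∧
    ∀ (F : ProperFlag p n) (μ : Measure F.nil), μ.IsAddHaarMeasure →
      ∀ X : Matrix (Fin n) (Fin n) ℚ_[p],
        ∫ U : F.nil, φ (X + (U : Matrix (Fin n) (Fin n) ℚ_[p])) ∂μ = 0

/-- For every prime `p` and `n ≥ 1`, there exists a nonzero locally
constant compactly supported Lie algebra cusp form on `M_n(ℚ_p)`. -/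
theorem exists_nonzero_lie_cusp_form (p : ℕ) [Fact p.Prime] (n : ℕ) (hn : 1 ≤ n) :
    ∃ φ : Matrix (Fin n) (Fin n) ℚ_[p] → ℂ, φ ≠ 0 ∧ IsLieCuspForm φ := by
  classical
  haveI : NeZero p := ⟨(Fact.out : p.Prime).ne_zero⟩
  obtain ⟨Bb, hB⟩ := LieCuspAux.exists_good_matrix p n hn
  set χ : AddChar (ZMod p) ℂ := ZMod.stdAddChar with hχ
  set φ : Matrix (Fin n) (Fin n) ℚ_[p] → ℂ := fun X =>
    if (∀ i j, ‖X i j‖ ≤ 1) then χ (Matrix.trace (Bb * X.map (LieCuspAux.qred p))) else 0 with hφ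
  have hphi_int : ∀ X, (∀ i j, ‖X i j‖ ≤ 1) →
      φ X = χ (Matrix.trace (Bb * X.map (LieCuspAux.qred p))) := fun X h => if_pos h
  have hphi_nint : ∀ X, ¬(∀ i j, ‖X i j‖ ≤ 1) → φ X = 0 := fun X h => if_neg h
  refine ⟨φ, ?_, ?_, ?_, ?_⟩
  · -- φ ≠ 0
    intro h0
    have h1 : φ 0 = 1 := by
      rw [hphi_int 0 (by intro i j; simp)]
      have hmap : (0 : Matrix (Fin n) (Fin n) ℚ_[p]).map (LieCuspAux.qred p) = 0 := by
        funext i j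
        simp only [Matrix.map_apply, Matrix.zero_apply]
        exact LieCuspAux.qred_zero
      rw [hmap, Matrix.mul_zero, Matrix.trace_zero, AddChar.map_zero_eq_one]
    rw [h0] at h1
    simp at h1
  · -- locally constant
    rw [IsLocallyConstant.iff_exists_open]
    intro X
    refine ⟨{Y | ∀ i j, ‖Y i j - X i j‖ < 1}, ?_, ?_, ?_⟩
    · have hset : {Y : Matrix (Fin n) (Fin n) ℚ_[p] | ∀ i j, ‖Y i j - X i j‖ < 1}
          = ⋂ i, ⋂ j, {Y | ‖Y i j - X i j‖ < 1} := by
        ext Y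
        simp [Set.mem_iInter]
      rw [hset]
      refine isOpen_iInter_of_finite fun i => isOpen_iInter_of_finite fun j => ?_
      have hcont : Continuous fun Y : Matrix (Fin n) (Fin n) ℚ_[p] => ‖Y i j - X i j‖ :=
        ((continuous_id.matrix_elem i j).sub continuous_const).norm
      exact isOpen_lt hcont continuous_const
    · intro i j
      simp
    · intro Y hY
      by_cases hX : ∀ i j, ‖X i j‖ ≤ 1
      · have hYle : ∀ i j, ‖Y i j‖ ≤ 1 := by
          intro i j
          have h2 := Padic.nonarchimedean (Y i j - X i j) (X i j)
          rw [sub_add_cancel] at h2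
          exact le_trans h2 (max_le (hY i j).le (hX i j))
        rw [hphi_int Y hYle, hphi_int X hX]
        have hmap : Y.map (LieCuspAux.qred p) = X.map (LieCuspAux.qred p) := by
          funext i j
          exact LieCuspAux.qred_eq_of_close (hYle i j) (hX i j) (hY i j)
        rw [hmap]
      · have hYn : ¬ ∀ i j, ‖Y i j‖ ≤ 1 := by
          intro hYle
          apply hX
          intro i j
          have h2 := Padic.nonarchimedean (X i j - Y i j) (Y i j)
          rw [sub_add_cancel] at h2
          refine le_trans h2 (max_le ?_ (hYle i j))
          rw [norm_sub_rev]
          exact (hY i j).le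
        rw [hphi_nint Y hYn, hphi_nint X hX]
  · -- compact support
    apply HasCompactSupport.intro
      (K := {X : Matrix (Fin n) (Fin n) ℚ_[p] | ∀ i j, ‖X i j‖ ≤ 1})
    · have hset : {X : Matrix (Fin n) (Fin n) ℚ_[p] | ∀ i j, ‖X i j‖ ≤ 1}
          = Set.univ.pi fun _ : Fin n => Set.univ.pi fun _ : Fin n => Metric.closedBall 0 1 := by
        ext X
        rw [Set.mem_setOf_eq]
        show _ ↔ (@id (Fin n → Fin n → ℚ_[p]) X) ∈ Set.univ.pi fun _ : Fin n => Set.univ.pi fun _ : Fin n => Metric.closedBall (0 : ℚ_[p]) 1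
        rw [Set.mem_univ_pi]
        refine forall_congr' fun i => ?_
        rw [Set.mem_univ_pi]
        refine forall_congr' fun j => ?_
        rw [Metric.mem_closedBall, dist_zero_right]
        exact Iff.rfl
      rw [hset]
      exact isCompact_univ_pi fun i => isCompact_univ_pi fun j => isCompact_closedBall 0 1
    · intro X hX
      exact hphi_nint X hX
  · -- cusp form condition
    intro F μ hμ X
    haveI := hμ
    obtain ⟨U₀, hnil, hint, ht⟩ := LieCuspAux.key Bb hB F
    set t : ZMod p := Matrix.trace (Bb * U₀.map (LieCuspAux.qred p)) with hts
    have hc1 : χ t ≠ 1 := by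
      intro h
      apply ht
      have h0 : χ t = χ 0 := by rw [h, AddChar.map_zero_eq_one]
      exact ZMod.injective_stdAddChar h0
    have hshift : ∀ Y : Matrix (Fin n) (Fin n) ℚ_[p], φ (Y + U₀) = χ t * φ Y := by
      intro Y
      by_cases hY : ∀ i j, ‖Y i j‖ ≤ 1
      · have hYU : ∀ i j, ‖(Y + U₀) i j‖ ≤ 1 := by
          intro i j
          exact le_trans (Padic.nonarchimedean _ _) (max_le (hY i j) (hint i j))
        rw [hphi_int _ hYU, hphi_int _ hY]
        have hmap : (Y + U₀).map (LieCuspAux.qred p)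
            = Y.map (LieCuspAux.qred p) + U₀.map (LieCuspAux.qred p) := by
          funext i j
          exact LieCuspAux.qred_add (hY i j) (hint i j)
        rw [hmap, Matrix.mul_add, Matrix.trace_add, ← hts, AddChar.map_add_eq_mul]
        ring
      · have hYU : ¬ ∀ i j, ‖(Y + U₀) i j‖ ≤ 1 := by
          intro hall
          apply hY
          intro i j
          have h3 : (Y + U₀) i j + (-U₀ i j) = Y i j := by
            simp [Matrix.add_apply]
          have h2 := Padic.nonarchimedean ((Y + U₀) i j) (-U₀ i j)
          rw [h3] at h2
          refine le_trans h2 (max_le (hall i j) ?_)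
          rw [norm_neg]
          exact hint i j
        rw [hphi_nint _ hYU, hphi_nint _ hY, mul_zero]
    set U₀' : F.nil := ⟨U₀, hnil⟩ with hU₀'
    have hinv := MeasureTheory.integral_add_right_eq_self (μ := μ)
      (fun U : F.nil => φ (X + (U : Matrix (Fin n) (Fin n) ℚ_[p]))) U₀'
    have heq : ∀ U : F.nil,
        φ (X + ((U + U₀' : F.nil) : Matrix (Fin n) (Fin n) ℚ_[p]))
          = χ t * φ (X + (U : Matrix (Fin n) (Fin n) ℚ_[p])) := by
      intro U
      have hadd : (X + ((U + U₀' : F.nil) : Matrix (Fin n) (Fin n) ℚ_[p]))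
          = (X + (U : Matrix (Fin n) (Fin n) ℚ_[p])) + U₀ := by
        rw [Submodule.coe_add, hU₀']
        rw [add_assoc]
      rw [hadd, hshift]
    have hfin : χ t * (∫ U : F.nil, φ (X + (U : Matrix (Fin n) (Fin n) ℚ_[p])) ∂μ)
        = ∫ U : F.nil, φ (X + (U : Matrix (Fin n) (Fin n) ℚ_[p])) ∂μ := by
      calc χ t * (∫ U : F.nil, φ (X + (U : Matrix (Fin n) (Fin n) ℚ_[p])) ∂μ)
          = ∫ U : F.nil, χ t * φ (X + (U : Matrix (Fin n) (Fin n) ℚ_[p])) ∂μ := by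
            rw [← smul_eq_mul, ← MeasureTheory.integral_smul]
            simp only [smul_eq_mul]
        _ = ∫ U : F.nil, φ (X + ((U + U₀' : F.nil) : Matrix (Fin n) (Fin n) ℚ_[p])) ∂μ := by
            refine MeasureTheory.integral_congr_ae (Filter.Eventually.of_forall fun U => ?_)
            exact (heq U).symm
        _ = ∫ U : F.nil, φ (X + (U : Matrix (Fin n) (Fin n) ℚ_[p])) ∂μ := hinv
    have hzero : (χ t - 1) * (∫ U : F.nil, φ (X + (U : Matrix (Fin n) (Fin n) ℚ_[p])) ∂μ) = 0 := by
      rw [sub_mul, one_mul, hfin, sub_self]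
    rcases mul_eq_zero.1 hzero with h | h
    · exact absurd (sub_eq_zero.1 h) hc1
    · exact h
end
end

section
/- Let G be a Hausdorff locally compact topological group, let N be a closed subgroup of G equipped with a Haar measure μ, and let (N_k)_{k≥0} be an increasing sequence of compact open subgroups of N with N = ⋃_{k≥0} N_k. Let f : G → ℂ be a continuous function with compact support such that ∫_N f(xu) dμ(u) = 0 for every x ∈ G. Then there exists k ≥ 0 such that ∫_{N_k} f(xu) dμ(u) = 0 for every x ∈ G. -/
open MeasureTheory
open scoped Pointwise

/-- Let `G` be a Hausdorff locally compact topological group, `N` a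
closed subgroup equipped with a Haar measure `μ`, and `(N_k)` an increasing sequence of
compact open subgroups of `N` with `N = ⋃ k, N_k`.  If `f : G → ℂ` is continuous with
compact support and `∫_N f(xu) dμ(u) = 0` for every `x`, then there is `k` such that
`∫_{N_k} f(xu) dμ(u) = 0` for every `x`. -/
theorem exists_k_integral_vanishes
    {G : Type*} [Group G] [TopologicalSpace G] [IsTopologicalGroup G] [T2Space G]
    [LocallyCompactSpace G]
    (N : Subgroup G) (hNclosed : IsClosed (N : Set G))
    [MeasurableSpace N] [BorelSpace N] (μ : Measure N) [μ.IsHaarMeasure]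
    (Nk : ℕ → Subgroup G)
    (hle : ∀ k, Nk k ≤ N)
    (hcompact : ∀ k, IsCompact (Nk k : Set G))
    (hopen : ∀ k, IsOpen {u : N | (u : G) ∈ Nk k})
    (hmono : Monotone Nk)
    (hunion : (N : Set G) = ⋃ k, (Nk k : Set G))
    (f : G → ℂ) (hfcont : Continuous f) (hfsupp : HasCompactSupport f)
    (hvanish : ∀ x : G, ∫ u : N, f (x * (u : G)) ∂μ = 0) :
    ∃ k : ℕ, ∀ x : G, ∫ u in {u : N | (u : G) ∈ Nk k}, f (x * (u : G)) ∂μ = 0 := by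
  set K : Set G := tsupport f with hK
  have hKcomp : IsCompact K := hfsupp
  -- the compact set `L = N ∩ K⁻¹K`, viewed inside `N`
  set S : Set N := Subtype.val ⁻¹' (K⁻¹ * K) with hS
  have hScomp : IsCompact S := by
    have hce : Topology.IsClosedEmbedding (Subtype.val : N → G) :=
      hNclosed.isClosedEmbedding_subtypeVal
    exact hce.isCompact_preimage (hKcomp.inv.mul hKcomp)
  -- find `k` with `S ⊆ N_k`
  have hcover : S ⊆ ⋃ k, {u : N | (u : G) ∈ Nk k} := by
    intro u _
    have : (u : G) ∈ ⋃ k, (Nk k : Set G) := hunion ▸ u.2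
    simpa using this
  obtain ⟨t, ht⟩ := hScomp.elim_finite_subcover _ (fun k => hopen k) hcover
  refine ⟨t.sup id, fun x => ?_⟩
  set k := t.sup id with hk
  have hSk : S ⊆ {u : N | (u : G) ∈ Nk k} := by
    intro u hu
    obtain ⟨i, hi, hui⟩ := Set.mem_iUnion₂.1 (ht hu)
    exact hmono (Finset.le_sup (f := id) hi) hui
  by_cases hzero : ∀ u : N, (u : G) ∈ Nk k → f (x * (u : G)) = 0
  · exact setIntegral_eq_zero_of_forall_eq_zero fun u hu => hzero u hu
  · push_neg at hzero
    obtain ⟨u₀, hu₀, hfu₀⟩ := hzero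
    have hxu₀ : x * (u₀ : G) ∈ K := subset_tsupport f hfu₀
    have hcompl : ∀ u : N, u ∉ {u : N | (u : G) ∈ Nk k} → f (x * (u : G)) = 0 := by
      intro u hu
      by_contra hfu
      have hxu : x * (u : G) ∈ K := subset_tsupport f hfu
      have hmem : (u₀⁻¹ * u : N) ∈ S := by
        show ((u₀⁻¹ * u : N) : G) ∈ K⁻¹ * K
        have : ((u₀⁻¹ * u : N) : G) = (x * (u₀ : G))⁻¹ * (x * (u : G)) := by
          push_cast; group
        rw [this]
        exact Set.mul_mem_mul (Set.inv_mem_inv.2 hxu₀) hxu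
      have h1 : ((u₀⁻¹ * u : N) : G) ∈ Nk k := hSk hmem
      have : (u : G) ∈ Nk k := by
        have := (Nk k).mul_mem hu₀ h1
        simpa [mul_assoc] using this
      exact hu this
    rw [setIntegral_eq_integral_of_forall_compl_eq_zero hcompl]
    exact hvanish x
end

section
/- Let p be a prime and n ≥ 1. The set E of matrices X ∈ M_n(ℚ_p) whose characteristic polynomial is irreducible over ℚ_p is a nonempty open subset of M_n(ℚ_p). Moreover, E is invariant under conjugation by GL_n(ℚ_p). -/
open Matrix Polynomial

section PolyOf

noncomputable def polyOf {F : Type*} [CommRing F] {m : ℕ} (c : Fin m → F) : Polynomial F :=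
  X ^ m + ∑ i : Fin m, C (c i) * X ^ (i : ℕ)

variable {F : Type*} [CommRing F] [Nontrivial F] {m : ℕ} (c : Fin m → F)

lemma polyOf_sum_degree_lt : (∑ i : Fin m, C (c i) * X ^ (i : ℕ)).degree < ((m : ℕ) : WithBot ℕ) := by
  apply lt_of_le_of_lt (Polynomial.degree_sum_le _ _)
  rw [Finset.sup_lt_iff (by exact_mod_cast WithBot.bot_lt_coe m)]
  intro i _
  apply lt_of_le_of_lt (Polynomial.degree_C_mul_X_pow_le _ _)
  exact_mod_cast i.isLt

lemma polyOf_monic : (polyOf c).Monic :=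
  Polynomial.monic_X_pow_add (polyOf_sum_degree_lt c)

lemma polyOf_natDegree : (polyOf c).natDegree = m := by
  have : (polyOf c).degree = m := by
    rw [polyOf, Polynomial.degree_add_eq_left_of_degree_lt]
    · exact Polynomial.degree_X_pow m
    · rw [Polynomial.degree_X_pow]; exact polyOf_sum_degree_lt c
  exact Polynomial.natDegree_eq_of_degree_eq_some this

lemma polyOf_coeff_lt {k : ℕ} (h : k < m) : (polyOf c).coeff k = c ⟨k, h⟩ := by
  rw [polyOf, Polynomial.coeff_add, Polynomial.coeff_X_pow, if_neg (by omega),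
    Polynomial.finset_sum_coeff]
  rw [Finset.sum_eq_single (⟨k, h⟩ : Fin m)]
  · simp
  · intro i _ hi
    rw [Polynomial.coeff_C_mul, Polynomial.coeff_X_pow, if_neg (by
      intro hh; apply hi; exact Fin.ext hh.symm), mul_zero]
  · simp
lemma polyOf_eq {g : Polynomial F} (hg : g.Monic) (hd : g.natDegree = m) :
    polyOf (fun i : Fin m => g.coeff (i : ℕ)) = g := by
  ext k
  rcases lt_trichotomy k m with h | h | h
  · rw [polyOf_coeff_lt _ h]
  · subst h
    rw [← hd] at *
    rw [polyOf]
    rw [Polynomial.coeff_add, Polynomial.coeff_X_pow, if_pos rfl, Polynomial.finset_sum_coeff]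
    rw [Finset.sum_eq_zero, add_zero]
    · exact (hg.coeff_natDegree).symm
    · intro i _
      rw [Polynomial.coeff_C_mul, Polynomial.coeff_X_pow, if_neg (by omega), mul_zero]
  · rw [Polynomial.coeff_eq_zero_of_natDegree_lt (by omega : g.natDegree < k),
      Polynomial.coeff_eq_zero_of_natDegree_lt (by rw [polyOf_natDegree]; omega)]
end PolyOf

section Padic
variable {p : ℕ} [hp : Fact p.Prime]

lemma gauss_bound {g h : Polynomial ℚ_[p]} (hg : g.Monic) (hh : h.Monic) {M : ℝ}
    (hM : 1 ≤ M) (hgh : ∀ k, ‖(g * h).coeff k‖ ≤ M) : ∀ i, ‖g.coeff i‖ ≤ M := by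
  classical
  -- sup norms
  set A : ℝ := (Finset.range (g.natDegree + 1)).sup' ⟨0, by simp⟩ (fun i => ‖g.coeff i‖) with hA
  set B : ℝ := (Finset.range (h.natDegree + 1)).sup' ⟨0, by simp⟩ (fun i => ‖h.coeff i‖) with hB
  have hAle : ∀ i, ‖g.coeff i‖ ≤ A := by
    intro i
    rcases le_or_gt i g.natDegree with hi | hi
    · exact Finset.le_sup' (fun i => ‖g.coeff i‖) (Finset.mem_range.mpr (by omega))
    · rw [Polynomial.coeff_eq_zero_of_natDegree_lt hi, norm_zero]
      exact le_trans (norm_nonneg (g.coeff g.natDegree)) (Finset.le_sup' (fun i => ‖g.coeff i‖)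
        (Finset.mem_range.mpr (Nat.lt_succ_self _)))
  have hBle : ∀ i, ‖h.coeff i‖ ≤ B := by
    intro i
    rcases le_or_gt i h.natDegree with hi | hi
    · exact Finset.le_sup' (fun i => ‖h.coeff i‖) (Finset.mem_range.mpr (by omega))
    · rw [Polynomial.coeff_eq_zero_of_natDegree_lt hi, norm_zero]
      exact le_trans (norm_nonneg (h.coeff h.natDegree)) (Finset.le_sup' (fun i => ‖h.coeff i‖)
        (Finset.mem_range.mpr (Nat.lt_succ_self _)))
  have hA1 : 1 ≤ A := by
    have := Finset.le_sup' (fun i => ‖g.coeff i‖) (Finset.mem_range.mpr (Nat.lt_succ_self g.natDegree))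
    rwa [hg.coeff_natDegree, norm_one] at this
  have hB1 : 1 ≤ B := by
    have := Finset.le_sup' (fun i => ‖h.coeff i‖) (Finset.mem_range.mpr (Nat.lt_succ_self h.natDegree))
    rwa [hh.coeff_natDegree, norm_one] at this
  have hApos : (0:ℝ) < A := lt_of_lt_of_le one_pos hA1
  have hBpos : (0:ℝ) < B := lt_of_lt_of_le one_pos hB1
  -- minimal attaining indices
  have hexA : ∃ i, ‖g.coeff i‖ = A := by
    obtain ⟨i, _, hi⟩ := Finset.exists_mem_eq_sup' (⟨0, by simp⟩ : (Finset.range (g.natDegree+1)).Nonempty) (fun i => ‖g.coeff i‖)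
    exact ⟨i, hi.symm⟩
  have hexB : ∃ j, ‖h.coeff j‖ = B := by
    obtain ⟨j, _, hj⟩ := Finset.exists_mem_eq_sup' (⟨0, by simp⟩ : (Finset.range (h.natDegree+1)).Nonempty) (fun i => ‖h.coeff i‖)
    exact ⟨j, hj.symm⟩
  set i₀ := Nat.find hexA with hi₀
  set j₀ := Nat.find hexB with hj₀
  have hgi₀ : ‖g.coeff i₀‖ = A := Nat.find_spec hexA
  have hhj₀ : ‖h.coeff j₀‖ = B := Nat.find_spec hexB
  have hglt : ∀ i < i₀, ‖g.coeff i‖ < A := fun i hi =>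
    lt_of_le_of_ne (hAle i) (Nat.find_min hexA hi)
  have hhlt : ∀ j < j₀, ‖h.coeff j‖ < B := fun j hj =>
    lt_of_le_of_ne (hBle j) (Nat.find_min hexB hj)
  -- the key coefficient
  have hcoeff : (g * h).coeff (i₀ + j₀) =
      g.coeff i₀ * h.coeff j₀ +
        ∑ x ∈ (Finset.HasAntidiagonal.antidiagonal (i₀ + j₀)).erase (i₀, j₀), g.coeff x.1 * h.coeff x.2 := by
    have hmem : (i₀, j₀) ∈ Finset.HasAntidiagonal.antidiagonal (i₀ + j₀) := Finset.HasAntidiagonal.mem_antidiagonal.mpr rfl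
    rw [Polynomial.coeff_mul, ← Finset.add_sum_erase _ (fun x => g.coeff x.1 * h.coeff x.2) hmem]
  have hrest : ‖∑ x ∈ (Finset.HasAntidiagonal.antidiagonal (i₀ + j₀)).erase (i₀, j₀), g.coeff x.1 * h.coeff x.2‖ < A * B := by
    rcases Finset.eq_empty_or_nonempty ((Finset.HasAntidiagonal.antidiagonal (i₀ + j₀)).erase (i₀, j₀)) with he | hne
    · rw [he, Finset.sum_empty, norm_zero]; positivity
    · apply lt_of_le_of_lt (hne.norm_sum_le_sup'_norm _)
      rw [Finset.sup'_lt_iff]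
      rintro ⟨a, b⟩ hab
      rw [Finset.mem_erase, Finset.HasAntidiagonal.mem_antidiagonal] at hab
      obtain ⟨hne', hsum⟩ := hab
      rcases lt_or_ge a i₀ with ha | ha
      · calc ‖g.coeff a * h.coeff b‖ ≤ ‖g.coeff a‖ * ‖h.coeff b‖ := norm_mul_le _ _
          _ < A * B := by
            nlinarith [hglt a ha, hBle b, norm_nonneg (g.coeff a), norm_nonneg (h.coeff b), hApos, hBpos]
      · have hb : b < j₀ := by
          rcases eq_or_lt_of_le ha with rfl | ha'
          · exact absurd (by omega : b = j₀) (fun hb => hne' (by simp [hb]))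
          · omega
        calc ‖g.coeff a * h.coeff b‖ ≤ ‖g.coeff a‖ * ‖h.coeff b‖ := norm_mul_le _ _
          _ < A * B := by
            nlinarith [hAle a, hhlt b hb, norm_nonneg (g.coeff a), norm_nonneg (h.coeff b), hApos, hBpos]
  have hmain : ‖g.coeff i₀ * h.coeff j₀‖ = A * B := by
    rw [norm_mul, hgi₀, hhj₀]
  have hnormcoeff : ‖(g * h).coeff (i₀ + j₀)‖ = A * B := by
    rw [hcoeff, IsUltrametricDist.norm_add_eq_max_of_norm_ne_norm (by rw [hmain]; exact ne_of_gt hrest)]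
    rw [hmain]
    exact max_eq_left (le_of_lt (hmain ▸ hrest))
  have hABM : A * B ≤ M := hnormcoeff ▸ hgh (i₀ + j₀)
  intro i
  calc ‖g.coeff i‖ ≤ A := hAle i
    _ ≤ A * B := le_mul_of_one_le_right (le_of_lt hApos) hB1
    _ ≤ M := hABM
noncomputable def mu (d e n : ℕ) :
    ((Fin d → ℚ_[p]) × (Fin e → ℚ_[p])) → (Fin n → ℚ_[p]) :=
  fun bc k => (polyOf bc.1 * polyOf bc.2).coeff (k : ℕ)

lemma polyOf_coeff_continuous {m : ℕ} (j : ℕ) :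
    Continuous (fun b : Fin m → ℚ_[p] => (polyOf b).coeff j) := by
  by_cases hj : j < m
  · have : (fun b : Fin m → ℚ_[p] => (polyOf b).coeff j) = fun b => b ⟨j, hj⟩ := by
      funext b; exact polyOf_coeff_lt b hj
    rw [this]; exact continuous_apply _
  · have : (fun b : Fin m → ℚ_[p] => (polyOf b).coeff j) = fun _ => if j = m then 1 else 0 := by
      funext b
      rcases eq_or_ne j m with rfl | hne
      · rw [if_pos rfl]
        have := (polyOf_monic b).coeff_natDegree
        rwa [polyOf_natDegree b] at this
      · rw [if_neg hne,
          Polynomial.coeff_eq_zero_of_natDegree_lt (by rw [polyOf_natDegree]; omega)]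
    rw [this]; exact continuous_const

lemma mu_continuous (d e n : ℕ) : Continuous (mu (p := p) d e n) := by
  apply continuous_pi
  intro k
  have : (fun bc : (Fin d → ℚ_[p]) × (Fin e → ℚ_[p]) => mu d e n bc k) =
      fun bc => ∑ x ∈ Finset.HasAntidiagonal.antidiagonal (k : ℕ),
        (polyOf bc.1).coeff x.1 * (polyOf bc.2).coeff x.2 := by
    funext bc; exact Polynomial.coeff_mul _ _ _
  rw [this]
  apply continuous_finset_sum
  intro x _
  exact ((polyOf_coeff_continuous x.1).comp continuous_fst).mul
    ((polyOf_coeff_continuous x.2).comp continuous_snd)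

lemma isClosed_range_mu (d e n : ℕ) (hde : d + e = n) :
    IsClosed (Set.range (mu (p := p) d e n)) := by
  apply isClosed_of_closure_subset
  intro a ha
  set M : ℝ := max (‖a‖ + 1) 1 with hM
  have hM1 : (1:ℝ) ≤ M := le_max_right _ _
  have hM0 : (0:ℝ) ≤ M := le_trans zero_le_one hM1
  set K₀ := Metric.closedBall (0 : (Fin d → ℚ_[p]) × (Fin e → ℚ_[p])) M with hK₀
  have hcomp : IsCompact K₀ := isCompact_closedBall _ _
  have hstep : a ∈ closure (mu (p := p) d e n '' K₀) := by
    rw [Metric.mem_closure_iff] at ha ⊢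
    intro ε hε
    obtain ⟨y, hy, hdist⟩ := ha (min ε 1) (lt_min hε one_pos)
    obtain ⟨bc, rfl⟩ := hy
    set g := polyOf bc.1 with hg
    set h := polyOf bc.2 with hh
    have hgh : ∀ k : ℕ, ‖(g * h).coeff k‖ ≤ M := by
      intro k
      have hprodmonic : (g * h).Monic := (polyOf_monic _).mul (polyOf_monic _)
      have hproddeg : (g * h).natDegree = n := by
        rw [Polynomial.natDegree_mul (polyOf_monic _).ne_zero (polyOf_monic _).ne_zero,
          polyOf_natDegree, polyOf_natDegree, hde]
      rcases lt_trichotomy k n with hk | hk | hk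
      · have : (g * h).coeff k = mu d e n bc ⟨k, hk⟩ := rfl
        rw [this]
        have h1 : dist (mu d e n bc ⟨k, hk⟩) (a ⟨k, hk⟩) ≤ dist (mu d e n bc) a :=
          dist_le_pi_dist _ _ _
        have h2 : dist (mu d e n bc) a < 1 := by
          rw [dist_comm]; exact lt_of_lt_of_le hdist (min_le_right _ _)
        have h3 : ‖a ⟨k, hk⟩‖ ≤ ‖a‖ := norm_le_pi_norm a _
        have h4 : ‖mu d e n bc ⟨k, hk⟩‖ ≤ ‖mu d e n bc ⟨k, hk⟩ - a ⟨k, hk⟩‖ + ‖a ⟨k, hk⟩‖ := by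
          have := norm_add_le (mu d e n bc ⟨k, hk⟩ - a ⟨k, hk⟩) (a ⟨k, hk⟩)
          simpa using this
        have h5 : ‖mu d e n bc ⟨k, hk⟩ - a ⟨k, hk⟩‖ = dist (mu d e n bc ⟨k, hk⟩) (a ⟨k, hk⟩) :=
          (dist_eq_norm _ _).symm
        have h6 := lt_of_le_of_lt h1 h2
        have h7 : M = max (‖a‖ + 1) 1 := rfl
        rw [h7]
        have := le_max_left (‖a‖ + 1) (1:ℝ)
        nlinarith [h3, h4, h5 ▸ h6]
      · subst hk
        rw [← hproddeg, hprodmonic.coeff_natDegree, norm_one]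
        exact hM1
      · rw [Polynomial.coeff_eq_zero_of_natDegree_lt (by omega), norm_zero]
        exact hM0
    have hgb : ∀ i, ‖g.coeff i‖ ≤ M := gauss_bound (polyOf_monic _) (polyOf_monic _) hM1 hgh
    have hhb : ∀ i, ‖h.coeff i‖ ≤ M := by
      apply gauss_bound (polyOf_monic _) (polyOf_monic _) hM1
      intro k; rw [mul_comm]; exact hgh k
    have hbcmem : bc ∈ K₀ := by
      rw [hK₀, Metric.mem_closedBall, Prod.dist_eq]
      apply max_le
      · rw [dist_pi_le_iff hM0]
        intro i
        show dist (bc.1 i) 0 ≤ M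
        rw [dist_zero_right]
        have := hgb (i : ℕ)
        rwa [polyOf_coeff_lt bc.1 i.isLt, Fin.eta] at this
      · rw [dist_pi_le_iff hM0]
        intro i
        show dist (bc.2 i) 0 ≤ M
        rw [dist_zero_right]
        have := hhb (i : ℕ)
        rwa [polyOf_coeff_lt bc.2 i.isLt, Fin.eta] at this
    exact ⟨mu d e n bc, Set.mem_image_of_mem _ hbcmem, lt_of_lt_of_le hdist (min_le_left _ _)⟩
  have himg : closure (mu (p := p) d e n '' K₀) = mu (p := p) d e n '' K₀ :=
    (hcomp.image (mu_continuous d e n)).isClosed.closure_eq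
  rw [himg] at hstep
  obtain ⟨bc, _, rfl⟩ := hstep
  exact Set.mem_range_self bc
lemma monic_natDegree_pos_not_isUnit {F : Type*} [Field F] {g : Polynomial F}
    (hg : g.Monic) (hd : 0 < g.natDegree) : ¬ IsUnit g := by
  intro hu
  rw [hg.isUnit_iff] at hu
  rw [hu, Polynomial.natDegree_one] at hd
  omega

lemma isOpen_irred_polyOf {n : ℕ} (hn : 1 ≤ n) :
    IsOpen {c : Fin n → ℚ_[p] | Irreducible (polyOf c)} := by
  classical
  rw [← isClosed_compl_iff]
  have hset : {c : Fin n → ℚ_[p] | Irreducible (polyOf c)}ᶜ =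
      ⋃ d ∈ Finset.Ioo 0 n, Set.range (mu (p := p) d (n - d) n) := by
    ext c
    simp only [Set.mem_compl_iff, Set.mem_setOf_eq, Set.mem_iUnion, Finset.mem_Ioo]
    constructor
    · intro hred
      set f := polyOf c with hf
      have hfmonic : f.Monic := polyOf_monic c
      have hfdeg : f.natDegree = n := polyOf_natDegree c
      have hfnu : ¬ IsUnit f := monic_natDegree_pos_not_isUnit hfmonic (by omega)
      rw [irreducible_iff] at hred
      push_neg at hred
      obtain ⟨a, b, hab, hanu, hbnu⟩ := hred hfnu
      have hf0 : f ≠ 0 := hfmonic.ne_zero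
      have ha0 : a ≠ 0 := by rintro rfl; rw [zero_mul] at hab; exact hf0 hab
      have hb0 : b ≠ 0 := by rintro rfl; rw [mul_zero] at hab; exact hf0 hab
      have hadeg : 0 < a.natDegree := by
        rcases Nat.eq_zero_or_pos a.natDegree with h | h
        · exfalso
          apply hanu
          rw [Polynomial.isUnit_iff_degree_eq_zero, Polynomial.degree_eq_natDegree ha0, h]
          rfl
        · exact h
      have hbdeg : 0 < b.natDegree := by
        rcases Nat.eq_zero_or_pos b.natDegree with h | h
        · exfalso
          apply hbnu
          rw [Polynomial.isUnit_iff_degree_eq_zero, Polynomial.degree_eq_natDegree hb0, h]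
          rfl
        · exact h
      have hsum : a.natDegree + b.natDegree = n := by
        rw [← hfdeg, hab, Polynomial.natDegree_mul ha0 hb0]
      set d := a.natDegree with hd
      refine ⟨d, ⟨hadeg, by omega⟩, ?_⟩
      set la := a.leadingCoeff with hla
      have hla0 : la ≠ 0 := Polynomial.leadingCoeff_ne_zero.mpr ha0
      set g := a * C la⁻¹ with hgdef
      set h := C la * b with hhdef
      have hgmonic : g.Monic := Polynomial.monic_mul_leadingCoeff_inv ha0
      have hgh : g * h = f := by
        rw [hgdef, hhdef, hab]
        have : C la⁻¹ * C la = 1 := by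
          rw [← Polynomial.C_mul, inv_mul_cancel₀ hla0, Polynomial.C_1]
        calc a * C la⁻¹ * (C la * b) = a * (C la⁻¹ * C la) * b := by ring
          _ = a * b := by rw [this, mul_one]
      have hhmonic : h.Monic := by
        have h1 : (g * h).leadingCoeff = 1 := by rw [hgh]; exact hfmonic.leadingCoeff
        rw [Polynomial.leadingCoeff_mul, hgmonic.leadingCoeff, one_mul] at h1
        exact h1
      have hgdeg : g.natDegree = d := by
        rw [hgdef, Polynomial.natDegree_mul_C (inv_ne_zero hla0)]
      have hhdeg : h.natDegree = n - d := by
        have : (g * h).natDegree = n := by rw [hgh, hfdeg]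
        rw [Polynomial.natDegree_mul hgmonic.ne_zero hhmonic.ne_zero, hgdeg] at this
        omega
      refine ⟨(fun i : Fin d => g.coeff (i : ℕ), fun i : Fin (n - d) => h.coeff (i : ℕ)), ?_⟩
      funext k
      show (polyOf _ * polyOf _).coeff (k : ℕ) = c k
      rw [polyOf_eq hgmonic hgdeg, polyOf_eq hhmonic hhdeg, hgh, hf,
        polyOf_coeff_lt c k.isLt, Fin.eta]
    · rintro ⟨d, ⟨hd0, hdn⟩, bc, rfl⟩
      set g := polyOf bc.1 with hg
      set h := polyOf bc.2 with hh
      have hgmonic : g.Monic := polyOf_monic _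
      have hhmonic : h.Monic := polyOf_monic _
      have hprodmonic : (g * h).Monic := hgmonic.mul hhmonic
      have hproddeg : (g * h).natDegree = n := by
        rw [Polynomial.natDegree_mul hgmonic.ne_zero hhmonic.ne_zero,
          polyOf_natDegree, polyOf_natDegree]
        omega
      have hkey : polyOf (mu (p := p) d (n - d) n bc) = g * h := by
        have := polyOf_eq hprodmonic hproddeg
        exact this
      rw [hkey]
      intro hirr
      rcases hirr.isUnit_or_isUnit rfl with hu | hu
      · exact monic_natDegree_pos_not_isUnit hgmonic (by rw [polyOf_natDegree]; omega) hu
      · exact monic_natDegree_pos_not_isUnit hhmonic (by rw [polyOf_natDegree]; omega) hu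
  rw [hset]
  apply Set.Finite.isClosed_biUnion (Finset.Ioo 0 n).finite_toSet
  intro d hd
  rw [Finset.mem_coe, Finset.mem_Ioo] at hd
  exact isClosed_range_mu d (n - d) n (by omega)

lemma eisenstein_irred (n : ℕ) (hn : 1 ≤ n) :
    Irreducible (X ^ n - C (p : ℚ_[p]) : (Polynomial ℚ_[p])) := by
  set f : Polynomial ℤ_[p] := X ^ n - C (p : ℤ_[p]) with hf
  have hmonic : f.Monic := Polynomial.monic_X_pow_sub_C _ (by omega)
  have hdeg : f.natDegree = n := Polynomial.natDegree_X_pow_sub_C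
  have hpnotmem : ¬ ((p:ℤ_[p]) ∈ (Ideal.span {(p : ℤ_[p])})^2) := by
    rw [pow_two, Ideal.span_singleton_mul_span_singleton, Ideal.mem_span_singleton]
    rintro ⟨c, hc⟩
    have h1 : ‖(p:ℤ_[p])‖ = ‖(p:ℤ_[p])*(p:ℤ_[p])*c‖ := by rw [← hc]
    rw [norm_mul, norm_mul, PadicInt.norm_p] at h1
    have hc1 : ‖c‖ ≤ 1 := c.norm_le_one
    have hppos : (0:ℝ) < (p:ℝ)⁻¹ := by
      have := hp.out.pos; positivity
    have hlt : (p:ℝ)⁻¹ * (p:ℝ)⁻¹ * ‖c‖ ≤ (p:ℝ)⁻¹ * (p:ℝ)⁻¹ := by nlinarith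
    rw [← h1] at hlt
    have hp1 : (1:ℝ) < p := by exact_mod_cast hp.out.one_lt
    have : (p:ℝ)⁻¹ < 1 := by rw [inv_lt_one_iff₀]; right; exact hp1
    nlinarith
  have hprime : (Ideal.span {(p : ℤ_[p])}).IsPrime := by
    rw [Ideal.span_singleton_prime (by exact_mod_cast hp.out.ne_zero)]
    exact PadicInt.prime_p
  have hcoeff : ∀ i, i ≠ n → f.coeff i = if i = 0 then -(p:ℤ_[p]) else 0 := by
    intro i hi
    simp [hf, Polynomial.coeff_X_pow, Polynomial.coeff_C]
    simp [hi]
    split <;> simp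
  have heis : f.IsEisensteinAt (Ideal.span {(p : ℤ_[p])}) := by
    constructor
    · rw [hmonic.leadingCoeff]
      intro h
      exact hprime.ne_top (Ideal.eq_top_of_isUnit_mem _ h isUnit_one)
    · intro i hi
      rw [hdeg] at hi
      rw [hcoeff i hi.ne]
      split
      · exact neg_mem (Ideal.mem_span_singleton_self _)
      · exact zero_mem _
    · rw [hcoeff 0 (by omega)]
      simp only [if_pos rfl]
      intro h
      exact hpnotmem ((neg_mem_iff).mp h)
  have hirrZ : Irreducible f := heis.irreducible hprime hmonic.isPrimitive (by omega)
  have hmap : f.map (algebraMap ℤ_[p] ℚ_[p]) = X ^ n - C (p : ℚ_[p]) := by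
    simp [hf, Polynomial.map_sub, Polynomial.map_pow, Polynomial.map_X, Polynomial.map_C]
  rw [← hmap]
  exact (hmonic.irreducible_iff_irreducible_map_fraction_map).mp hirrZ

lemma exists_irred (p : ℕ) [hp : Fact p.Prime] (n : ℕ) (hn : 1 ≤ n)
    (hirr : Irreducible (X ^ n - C (p : ℚ_[p]) : (Polynomial ℚ_[p]))) :
    ∃ X : Matrix (Fin n) (Fin n) ℚ_[p], Irreducible X.charpoly := by
  set f : Polynomial ℚ_[p] := X ^ n - C (p : ℚ_[p]) with hfdef
  have hfmonic : f.Monic := Polynomial.monic_X_pow_sub_C _ (by omega)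
  have hf0 : f ≠ 0 := hfmonic.ne_zero
  haveI : Fact (Irreducible f) := ⟨hirr⟩
  let A := AdjoinRoot f
  let pb : PowerBasis ℚ_[p] A := AdjoinRoot.powerBasis hf0
  haveI : FiniteDimensional ℚ_[p] A := Module.Finite.of_basis pb.basis
  have hfdeg : f.natDegree = n := Polynomial.natDegree_X_pow_sub_C
  have hdim : pb.dim = n := hfdeg
  let b : Module.Basis (Fin n) ℚ_[p] A := pb.basis.reindex (finCongr hdim)
  let T : Module.End ℚ_[p] A := Algebra.lmul ℚ_[p] A (AdjoinRoot.root f)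
  have hinj : Function.Injective (Algebra.lmul ℚ_[p] A) := by
    intro x y h
    simpa using congrArg (fun φ => φ 1) h
  have hmin : minpoly ℚ_[p] T = f := by
    rw [minpoly.algHom_eq _ hinj]
    exact (minpoly.eq_of_irreducible_of_monic hirr (by rw [AdjoinRoot.aeval_eq, AdjoinRoot.mk_self]) hfmonic).symm
  have hminT : minpoly ℚ_[p] T ∣ T.charpoly := LinearMap.minpoly_dvd_charpoly T
  have hcdeg : T.charpoly.natDegree = n := by
    rw [← LinearMap.charpoly_toMatrix T b, Matrix.charpoly_natDegree_eq_dim]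
    simp
  have hcharpoly : T.charpoly = f := by
    obtain ⟨q, hq⟩ := hminT
    rw [hmin] at hq
    have hq0 : q ≠ 0 := by
      intro h; rw [h, mul_zero] at hq; exact (LinearMap.charpoly_monic T).ne_zero hq
    have hdeg : f.natDegree = n := Polynomial.natDegree_X_pow_sub_C
    have : n = f.natDegree + q.natDegree := by
      rw [← hcdeg, hq, Polynomial.natDegree_mul hf0 hq0]
    have hq00 : q.natDegree = 0 := by omega
    have hlead : q.leadingCoeff = 1 := by
      have := congrArg Polynomial.leadingCoeff hq
      rw [Polynomial.leadingCoeff_mul, hfmonic.leadingCoeff, one_mul,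
        (LinearMap.charpoly_monic T).leadingCoeff] at this
      exact this.symm
    have : q = 1 := by
      rw [Polynomial.eq_C_of_natDegree_eq_zero hq00] at hlead ⊢
      rw [Polynomial.leadingCoeff_C] at hlead
      rw [hlead]; simp
    rw [hq, this, mul_one]
  refine ⟨LinearMap.toMatrix b b T, ?_⟩
  rw [LinearMap.charpoly_toMatrix T b, hcharpoly]
  exact hirr

lemma charpoly_conj (g : GL (Fin n) ℚ_[p]) (A : Matrix (Fin n) (Fin n) ℚ_[p]) :
    (g.val * A * (g⁻¹).val).charpoly = A.charpoly := by
  classical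
  let u : (Matrix (Fin n) (Fin n) (Polynomial ℚ_[p]))ˣ :=
    Units.map ((C : ℚ_[p] →+* Polynomial ℚ_[p]).mapMatrix).toMonoidHom g
  have hcm : charmatrix (g.val * A * (g⁻¹).val) = u.val * charmatrix A * (u⁻¹).val := by
    rw [charmatrix, charmatrix, mul_sub, sub_mul]
    congr 1
    · refine Eq.symm ?_
      have hc := (Matrix.scalar_commute (n := Fin n) (Polynomial.X : Polynomial ℚ_[p])
        (fun r => Commute.all _ r) u.val)
      calc u.val * Matrix.scalar (Fin n) (Polynomial.X : Polynomial ℚ_[p]) * (u⁻¹).val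
          = Matrix.scalar (Fin n) (Polynomial.X : Polynomial ℚ_[p]) * (u.val * (u⁻¹).val) := by
            rw [← hc.eq, mul_assoc]
        _ = Matrix.scalar (Fin n) (Polynomial.X : Polynomial ℚ_[p]) := by
            rw [u.mul_inv, mul_one]
    · show (C : ℚ_[p] →+* _).mapMatrix (g.val * A * (g⁻¹).val) = _
      have h1 : u.val = (C : ℚ_[p] →+* _).mapMatrix g.val := rfl
      have h2 : (u⁻¹).val = (C : ℚ_[p] →+* _).mapMatrix (g⁻¹).val := by
        exact (Units.coe_map_inv ((C : ℚ_[p] →+* Polynomial ℚ_[p]).mapMatrix).toMonoidHom g)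
      rw [h1, h2, _root_.map_mul, _root_.map_mul]
  rw [Matrix.charpoly, Matrix.charpoly, hcm, Matrix.det_units_conj]

lemma eval_charpoly (A : Matrix (Fin n) (Fin n) ℚ_[p]) (t : ℚ_[p]) :
    Polynomial.eval t A.charpoly = (Matrix.diagonal (fun _ : Fin n => t) - A).det := by
  classical
  rw [Matrix.charpoly]
  have := (Polynomial.evalRingHom t).map_det (charmatrix A)
  rw [show Polynomial.eval t (charmatrix A).det = (Polynomial.evalRingHom t) (charmatrix A).det from rfl, this]
  congr 1
  ext i j
  show Polynomial.eval t (charmatrix A i j) = _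
  by_cases hij : i = j
  · subst hij
    simp [charmatrix_apply, Matrix.diagonal_apply_eq]
  · simp [charmatrix_apply, Matrix.diagonal_apply_ne _ hij, Matrix.diagonal_apply_ne _ hij]

lemma charpoly_coeff_continuous :
    Continuous (fun A : Matrix (Fin n) (Fin n) ℚ_[p] => fun k : Fin n => A.charpoly.coeff (k : ℕ)) := by
  classical
  set v : Fin (n+1) → ℚ_[p] := fun i => ((i : ℕ) : ℚ_[p]) with hv
  have hinj : Set.InjOn v (Finset.univ : Finset (Fin (n+1))) := by
    intro i _ j _ hij
    exact Fin.ext (Nat.cast_injective hij)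
  have key : ∀ (A : Matrix (Fin n) (Fin n) ℚ_[p]) (k : ℕ),
      A.charpoly.coeff k = ∑ i : Fin (n+1),
        (Matrix.diagonal (fun _ : Fin n => v i) - A).det * (Lagrange.basis Finset.univ v i).coeff k := by
    intro A k
    have hdeg : A.charpoly.degree < (Finset.univ : Finset (Fin (n+1))).card := by
      rw [Matrix.charpoly_degree_eq_dim, Finset.card_univ, Fintype.card_fin, Fintype.card_fin]
      exact_mod_cast Nat.lt_succ_self n
    have heq := Lagrange.eq_interpolate hinj hdeg
    conv_lhs => rw [heq]
    rw [Lagrange.interpolate_apply, Polynomial.finset_sum_coeff]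
    apply Finset.sum_congr rfl
    intro i _
    rw [Polynomial.coeff_C_mul, _root_.eval_charpoly]
  apply continuous_pi
  intro k
  have : (fun A : Matrix (Fin n) (Fin n) ℚ_[p] => A.charpoly.coeff (k : ℕ)) =
      fun A => ∑ i : Fin (n+1),
        (Matrix.diagonal (fun _ : Fin n => v i) - A).det * (Lagrange.basis Finset.univ v i).coeff (k : ℕ) := by
    funext A; exact key A k
  rw [this]
  apply continuous_finset_sum
  intro i _
  exact ((continuous_const.sub continuous_id).matrix_det).mul continuous_const

end Padic

/-- The set of matrices in `M_n(ℚ_p)` with irreducible characteristic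
polynomial is a nonempty open subset, invariant under conjugation by `GL_n(ℚ_p)`. -/
theorem irreducible_charpoly_nonempty_open_conjinvariant
    (p : ℕ) [Fact p.Prime] (n : ℕ) (hn : 1 ≤ n) :
    ({X : Matrix (Fin n) (Fin n) ℚ_[p] | Irreducible X.charpoly}).Nonempty ∧
    IsOpen {X : Matrix (Fin n) (Fin n) ℚ_[p] | Irreducible X.charpoly} ∧
    (∀ g : GL (Fin n) ℚ_[p], ∀ X : Matrix (Fin n) (Fin n) ℚ_[p],
      Irreducible X.charpoly → Irreducible (g.val * X * (g⁻¹).val).charpoly) := by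
  refine ⟨?_, ?_, ?_⟩
  · obtain ⟨A, hA⟩ := exists_irred p n hn (eisenstein_irred (p := p) n hn)
    exact ⟨A, hA⟩
  · have hE : {X : Matrix (Fin n) (Fin n) ℚ_[p] | Irreducible X.charpoly} =
        (fun A : Matrix (Fin n) (Fin n) ℚ_[p] => fun k : Fin n => A.charpoly.coeff (k : ℕ)) ⁻¹'
          {c : Fin n → ℚ_[p] | Irreducible (polyOf c)} := by
      ext A
      simp only [Set.mem_setOf_eq, Set.mem_preimage]
      have hpoly : polyOf (fun k : Fin n => A.charpoly.coeff (k : ℕ)) = A.charpoly :=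
        polyOf_eq A.charpoly_monic (by rw [Matrix.charpoly_natDegree_eq_dim, Fintype.card_fin])
      rw [hpoly]
    rw [hE]
    exact (isOpen_irred_polyOf hn).preimage charpoly_coeff_continuous
  · intro g X hX
    rw [charpoly_conj g X]
    exact hX
end
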